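/- If M is an n×n Perron-Frobenius integer matrix with spectral radius λ and c denotes the number of edges minus the number of vertices of the associated digraph (c = sum of all entries of M minus n), then c ≤ λ^{2n} - 1. -/

import Mathlib

open Polynomial Matrix

namespace HamSongAux

variable {n : ℕ}

lemma mul_le_pow_add (M : Matrix (Fin n) (Fin n) ℕ) (a b : ℕ) (x z y : Fin n) :
    (M ^ a) x z * (M ^ b) z y ≤ (M ^ (a + b)) x y := by
  rw [pow_add, Matrix.mul_apply]
  exact Finset.single_le_sum (f := fun w => (M ^ a) x w * (M ^ b) w y)
    (fun i _ => Nat.zero_le _) (Finset.mem_univ z)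

lemma pos_step (M : Matrix (Fin n) (Fin n) ℕ) {a b : ℕ} {x z y : Fin n}
    (h1 : 0 < (M ^ a) x z) (h2 : 0 < (M ^ b) z y) : 0 < (M ^ (a + b)) x y :=
  lt_of_lt_of_le (Nat.mul_pos h1 h2) (mul_le_pow_add M a b x z y)

lemma exists_mid (M : Matrix (Fin n) (Fin n) ℕ) {a b : ℕ} {x y : Fin n}
    (h : 0 < (M ^ (a + b)) x y) : ∃ z, 0 < (M ^ a) x z ∧ 0 < (M ^ b) z y := by
  rw [pow_add, Matrix.mul_apply] at h
  by_contra hc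
  push_neg at hc
  have : ∀ z ∈ Finset.univ, (M ^ a) x z * (M ^ b) z y = 0 := by
    intro z _
    rcases Nat.eq_zero_or_pos ((M ^ a) x z) with h0 | h0
    · rw [h0, zero_mul]
    · have h2 := hc z h0
      have h3 : (M ^ b) z y = 0 := by omega
      rw [h3, mul_zero]
  rw [Finset.sum_eq_zero this] at h
  exact absurd h (lt_irrefl 0)

/-- one reachability step -/
def rstep (M : Matrix (Fin n) (Fin n) ℕ) (S : Finset (Fin n)) : Finset (Fin n) :=
  S ∪ Finset.univ.filter (fun y => ∃ z ∈ S, 0 < M z y)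

lemma subset_rstep (M : Matrix (Fin n) (Fin n) ℕ) (S : Finset (Fin n)) : S ⊆ rstep M S :=
  Finset.subset_union_left

lemma iter_mono (M : Matrix (Fin n) (Fin n) ℕ) (x : Fin n) {s t : ℕ} (h : s ≤ t) :
    (rstep M)^[s] {x} ⊆ (rstep M)^[t] {x} := by
  induction t with
  | zero => simp_all
  | succ t ih =>
    rcases Nat.lt_or_ge s (t+1) with h' | h'
    · refine (ih (by omega)).trans ?_
      rw [Function.iterate_succ_apply']
      exact subset_rstep M _
    · have : s = t + 1 := by omega
      subst this; rfl

lemma mem_iter_of_pos (M : Matrix (Fin n) (Fin n) ℕ) (x : Fin n) :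
    ∀ t (y : Fin n), 0 < (M ^ t) x y → y ∈ (rstep M)^[t] {x} := by
  intro t
  induction t with
  | zero =>
    intro y hy
    simp only [pow_zero] at hy
    rcases eq_or_ne x y with rfl | hne
    · simp
    · rw [Matrix.one_apply_ne hne] at hy; omega
  | succ t ih =>
    intro y hy
    obtain ⟨z, hz1, hz2⟩ := exists_mid M (a := t) (b := 1) (by rwa [])
    rw [pow_one] at hz2
    rw [Function.iterate_succ_apply']
    exact Finset.mem_union_right _ (Finset.mem_filter.mpr ⟨Finset.mem_univ _, z, ih z hz1, hz2⟩)

lemma pos_of_mem_iter (M : Matrix (Fin n) (Fin n) ℕ) (x : Fin n) :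
    ∀ t (y : Fin n), y ∈ (rstep M)^[t] {x} → ∃ s ≤ t, 0 < (M ^ s) x y := by
  intro t
  induction t with
  | zero =>
    intro y hy
    simp only [Function.iterate_zero, id, Finset.mem_singleton] at hy
    subst hy
    exact ⟨0, le_refl _, by simp [Matrix.one_apply_eq]⟩
  | succ t ih =>
    intro y hy
    rw [Function.iterate_succ_apply'] at hy
    rcases Finset.mem_union.mp hy with h | h
    · obtain ⟨s, hs, hpos⟩ := ih y h
      exact ⟨s, by omega, hpos⟩
    · obtain ⟨-, z, hz, hMz⟩ := Finset.mem_filter.mp h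
      obtain ⟨s, hs, hpos⟩ := ih z hz
      refine ⟨s + 1, by omega, pos_step M hpos (by rwa [pow_one])⟩

lemma iter_stab (M : Matrix (Fin n) (Fin n) ℕ) (x : Fin n) {t : ℕ}
    (h : (rstep M)^[t+1] {x} = (rstep M)^[t] {x}) :
    ∀ m, t ≤ m → (rstep M)^[m] {x} = (rstep M)^[t] {x} := by
  intro m hm
  induction m with
  | zero => have : t = 0 := by omega
            subst this; rfl
  | succ m ih =>
    rcases Nat.lt_or_ge t (m+1) with h' | h'
    · have hmt : t ≤ m := by omega
      rw [Function.iterate_succ_apply', ih hmt]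
      calc rstep M ((rstep M)^[t] {x}) = (rstep M)^[t+1] {x} :=
            (Function.iterate_succ_apply' _ _ _).symm
        _ = _ := h
    · have : t = m + 1 := by omega
      subst this; rfl

lemma reach_short (M : Matrix (Fin n) (Fin n) ℕ) (x y : Fin n) {k : ℕ}
    (hk : 0 < (M ^ k) x y) : ∃ s < n, 0 < (M ^ s) x y := by
  -- there is a stabilization time t < n
  have hstab : ∃ t < n, (rstep M)^[t+1] {x} = (rstep M)^[t] {x} := by
    by_contra hc
    push_neg at hc
    have hcard : ∀ t ≤ n, t + 1 ≤ ((rstep M)^[t] {x}).card := by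
      intro t
      induction t with
      | zero => intro _; simp
      | succ t ih =>
        intro ht
        have h1 : (rstep M)^[t] {x} ⊂ (rstep M)^[t+1] {x} :=
          Finset.ssubset_iff_subset_ne.mpr ⟨iter_mono M x (by omega), Ne.symm (hc t (by omega))⟩
        have := Finset.card_lt_card h1
        have := ih (by omega)
        omega
    have h1 := hcard n (le_refl n)
    have h2 : ((rstep M)^[n] {x}).card ≤ n := by
      simpa using Finset.card_le_univ ((rstep M)^[n] {x})
    omega
  obtain ⟨t, htn, hstab⟩ := hstab
  have hy : y ∈ (rstep M)^[t] {x} := by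
    rcases Nat.lt_or_ge k t with h' | h'
    · exact iter_mono M x (le_of_lt h') (mem_iter_of_pos M x k y hk)
    · rw [← iter_stab M x hstab k h']
      exact mem_iter_of_pos M x k y hk
  obtain ⟨s, hs, hpos⟩ := pos_of_mem_iter M x t y hy
  exact ⟨s, by omega, hpos⟩


lemma rowsum_mul (M A : Matrix (Fin n) (Fin n) ℕ) (x : Fin n) :
    ∑ y, (A * M) x y = ∑ z, A x z * ∑ v, M z v := by
  simp_rw [Matrix.mul_apply, Finset.mul_sum]
  exact Finset.sum_comm

lemma rowsum_pow_pos (M : Matrix (Fin n) (Fin n) ℕ) (hD : ∀ u, 0 < ∑ v, M u v) (x : Fin n) :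
    ∀ t, 0 < ∑ y, (M ^ t) x y := by
  intro t
  induction t with
  | zero => simp [Matrix.one_apply]
  | succ t ih =>
    rw [pow_succ, rowsum_mul]
    calc 0 < ∑ z, (M ^ t) x z := ih
      _ ≤ ∑ z, (M ^ t) x z * ∑ v, M z v :=
        Finset.sum_le_sum (fun z _ => Nat.le_mul_of_pos_right _ (hD z))

lemma part1 (M : Matrix (Fin n) (Fin n) ℕ) {k : ℕ} (hk : 0 < k)
    (hpos : ∀ i j, 0 < (M ^ k) i j) (x : Fin n) :
    (∑ i, ∑ j, M i j) + 1 ≤ (∑ y, (M ^ (2 * n)) x y) + n := by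
  have hconn : ∀ a b : Fin n, ∃ s < n, 0 < (M ^ s) a b := fun a b =>
    reach_short M a b (hpos a b)
  have hD : ∀ u, 0 < ∑ v, M u v := by
    intro u
    obtain ⟨z, hz1, hz2⟩ := exists_mid M (a := 1) (b := k - 1)
      (show 0 < (M ^ (1 + (k - 1))) u u by
        rw [show 1 + (k - 1) = k by omega]; exact hpos u u)
    rw [pow_one] at hz1
    exact lt_of_lt_of_le hz1
      (Finset.single_le_sum (fun v _ => Nat.zero_le _) (Finset.mem_univ z))
  have hcycle : ∀ u, ∃ g, 0 < g ∧ g ≤ n ∧ 0 < (M ^ g) u u := by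
    intro u
    obtain ⟨z, hz1, hz2⟩ := exists_mid M (a := k - 1) (b := 1)
      (show 0 < (M ^ (k - 1 + 1)) u u by
        rw [show k - 1 + 1 = k by omega]; exact hpos u u)
    rw [pow_one] at hz2
    obtain ⟨s, hs, hpos'⟩ := hconn u z
    refine ⟨s + 1, by omega, by omega, pos_step M hpos' (by rwa [pow_one])⟩
  have hwindow : ∀ u, ∃ t, n ≤ t ∧ t < 2 * n ∧ 0 < (M ^ t) x u := by
    intro u
    obtain ⟨g, hg1, hg2, hgpos⟩ := hcycle u
    obtain ⟨d, hd, hdpos⟩ := hconn x u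
    have key : ∀ b a, n ≤ a + b → a < n + g → 0 < (M ^ a) x u →
        ∃ t, n ≤ t ∧ t < n + g ∧ 0 < (M ^ t) x u := by
      intro b
      induction b with
      | zero => intro a h1 h2 h3; exact ⟨a, by omega, h2, h3⟩
      | succ b ih =>
        intro a h1 h2 h3
        rcases Nat.lt_or_ge a n with h' | h'
        · exact ih (a + g) (by omega) (by omega) (pos_step M h3 hgpos)
        · exact ⟨a, h', h2, h3⟩
    obtain ⟨t, h1, h2, h3⟩ := key n d (by omega) (by omega) hdpos
    exact ⟨t, h1, by omega, h3⟩
  choose tf htf1 htf2 htf3 using hwindow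
  have main : ∀ s, s ≤ n →
      1 + ∑ u ∈ Finset.univ.filter (fun u => tf u < n + s), ((∑ v, M u v) - 1)
        ≤ ∑ y, (M ^ (n + s)) x y := by
    intro s
    induction s with
    | zero =>
      intro _
      have hempty : Finset.univ.filter (fun u : Fin n => tf u < n + 0) = ∅ := by
        apply Finset.eq_empty_of_forall_notMem
        intro u hu
        rw [Finset.mem_filter] at hu
        have := htf1 u
        omega
      rw [hempty]
      simpa using Nat.succ_le_of_lt (rowsum_pow_pos M hD x (n + 0))
    | succ s ih =>
      intro hs
      have ihs := ih (by omega)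
      have expand : ∑ y, (M ^ (n + (s + 1))) x y
          = (∑ y, (M ^ (n + s)) x y) + ∑ z, (M ^ (n + s)) x z * ((∑ v, M z v) - 1) := by
        rw [show n + (s + 1) = (n + s) + 1 by omega, pow_succ, rowsum_mul,
          ← Finset.sum_add_distrib]
        apply Finset.sum_congr rfl
        intro z _
        obtain ⟨e, he⟩ : ∃ e, (∑ v, M z v) = e + 1 :=
          ⟨(∑ v, M z v) - 1, by have := hD z; omega⟩
        rw [he, Nat.add_sub_cancel]
        ring
      have hstep : ∑ u ∈ Finset.univ.filter (fun u => tf u = n + s), ((∑ v, M u v) - 1)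
          ≤ ∑ z, (M ^ (n + s)) x z * ((∑ v, M z v) - 1) := by
        calc ∑ u ∈ Finset.univ.filter (fun u => tf u = n + s), ((∑ v, M u v) - 1)
            ≤ ∑ u ∈ Finset.univ.filter (fun u => tf u = n + s),
                (M ^ (n + s)) x u * ((∑ v, M u v) - 1) := by
              apply Finset.sum_le_sum
              intro u hu
              rw [Finset.mem_filter] at hu
              have hpos' : 0 < (M ^ (n + s)) x u := by
                have := htf3 u
                rwa [hu.2] at this
              exact Nat.le_mul_of_pos_left _ hpos'
          _ ≤ ∑ z, (M ^ (n + s)) x z * ((∑ v, M z v) - 1) :=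
              Finset.sum_le_sum_of_subset (Finset.filter_subset _ _)
      have hsplit : Finset.univ.filter (fun u : Fin n => tf u < n + (s + 1))
          = Finset.univ.filter (fun u => tf u < n + s)
            ∪ Finset.univ.filter (fun u => tf u = n + s) := by
        ext u
        simp only [Finset.mem_filter, Finset.mem_union, Finset.mem_univ, true_and]
        omega
      have hdisj : Disjoint (Finset.univ.filter (fun u : Fin n => tf u < n + s))
          (Finset.univ.filter (fun u : Fin n => tf u = n + s)) := by
        rw [Finset.disjoint_left]
        intro u hu1 hu2
        rw [Finset.mem_filter] at hu1 hu2
        omega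
      rw [hsplit, Finset.sum_union hdisj]
      omega
  have last := main n (le_refl n)
  have hfull : Finset.univ.filter (fun u : Fin n => tf u < n + n) = Finset.univ := by
    apply Finset.filter_true_of_mem
    intro u _
    have := htf2 u
    omega
  rw [hfull] at last
  have hEsum : ∑ i, ∑ j, M i j = (∑ u, ((∑ v, M u v) - 1)) + n := by
    have : ∀ u : Fin n, (∑ v, M u v) = ((∑ v, M u v) - 1) + 1 := fun u => by
      have := hD u; omega
    calc ∑ i, ∑ j, M i j = ∑ u, (((∑ v, M u v) - 1) + 1) :=
          Finset.sum_congr rfl (fun u _ => this u)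
      _ = (∑ u, ((∑ v, M u v) - 1)) + n := by
          rw [Finset.sum_add_distrib]
          simp
  rw [show 2 * n = n + n by omega]
  omega

lemma eval_charpoly_eq_det (A : Matrix (Fin n) (Fin n) ℂ) (μ : ℂ) :
    A.charpoly.eval μ = ((Matrix.scalar (Fin n)) μ - A).det := by
  rw [Matrix.charpoly, eval_det, matPolyEquiv_charmatrix]
  rw [Polynomial.eval_sub, Polynomial.eval_X, Polynomial.eval_C]

lemma mem_spectrum_iff_root (A : Matrix (Fin n) (Fin n) ℂ) (μ : ℂ) :
    μ ∈ spectrum ℂ A ↔ A.charpoly.eval μ = 0 := by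
  rw [spectrum.mem_iff, Matrix.isUnit_iff_isUnit_det, isUnit_iff_ne_zero, not_not,
    eval_charpoly_eq_det]
  rw [show (algebraMap ℂ (Matrix (Fin n) (Fin n) ℂ)) μ = (Matrix.scalar (Fin n)) μ from rfl]
lemma abs_trace_pow_le (A : Matrix (Fin n) (Fin n) ℂ) (lam : ℝ)
    (hb : ∀ μ ∈ spectrum ℂ A, ‖μ‖ ≤ lam) {t : ℕ} (ht : 0 < t)
    (hlam : 0 ≤ lam) :
    ‖(A ^ t).trace‖ ≤ (n : ℝ) * lam ^ t := by
  have h1 : (A ^ t).trace = ((A ^ t).charpoly).roots.sum := trace_eq_sum_roots_charpoly _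
  have hcard : Multiset.card ((A ^ t).charpoly).roots = n := by
    rw [splits_iff_card_roots.mp (IsAlgClosed.splits _), Matrix.charpoly_natDegree_eq_dim,
      Fintype.card_fin]
  have hroots : ∀ r ∈ (((A ^ t).charpoly).roots.map (fun x => ‖x‖)), r ≤ lam ^ t := by
    intro r hr
    obtain ⟨z, hz, rfl⟩ := Multiset.mem_map.mp hr
    have hsp : z ∈ spectrum ℂ (A ^ t) := (mem_spectrum_iff_root _ _).mpr
      (Polynomial.isRoot_of_mem_roots hz)
    rw [spectrum.map_pow_of_pos _ ht] at hsp
    obtain ⟨μ, hμ, rfl⟩ := hsp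
    rw [norm_pow]
    exact pow_le_pow_left₀ (norm_nonneg _) (hb μ hμ) t
  calc ‖(A ^ t).trace‖ = ‖(((A ^ t).charpoly).roots).sum‖ := by
        rw [h1]
    _ ≤ ((((A ^ t).charpoly).roots).map (fun x => ‖x‖)).sum := norm_multiset_sum_le _
    _ ≤ (Multiset.card ((((A ^ t).charpoly).roots).map (fun x => ‖x‖))) • (lam ^ t) :=
        Multiset.sum_le_card_nsmul _ _ hroots
    _ = (n : ℝ) * lam ^ t := by rw [Multiset.card_map, hcard, nsmul_eq_mul]

lemma nat_trace_bound (M : Matrix (Fin n) (Fin n) ℕ) (lam : ℝ)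
    (hb : ∀ μ ∈ spectrum ℂ (M.map (Nat.cast : ℕ → ℂ)), ‖μ‖ ≤ lam)
    {t : ℕ} (ht : 0 < t) (hlam : 0 ≤ lam) :
    ((M ^ t).trace : ℝ) ≤ (n : ℝ) * lam ^ t := by
  have hmap : (M.map (Nat.cast : ℕ → ℂ)) ^ t = (M ^ t).map (Nat.cast : ℕ → ℂ) := by
    have h := map_pow ((Nat.castRingHom ℂ).mapMatrix) M t
    simpa [RingHom.mapMatrix_apply] using h.symm
  have htr : ((M.map (Nat.cast : ℕ → ℂ)) ^ t).trace = (((M ^ t).trace : ℕ) : ℂ) := by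
    rw [hmap]
    simp [Matrix.trace, Matrix.map_apply, Matrix.diag]
  have h2 := abs_trace_pow_le (M.map (Nat.cast : ℕ → ℂ)) lam hb ht hlam
  rw [htr, Complex.norm_natCast] at h2
  exact h2

lemma spectrum_bound (M : Matrix (Fin n) (Fin n) ℕ) (lam : ℝ)
    (hmax : ∀ μ : ℂ, Polynomial.aeval μ ((M.map (Nat.cast : ℕ → ℤ)).charpoly) = 0 →
      ‖μ‖ ≤ lam) :
    ∀ μ ∈ spectrum ℂ (M.map (Nat.cast : ℕ → ℂ)), ‖μ‖ ≤ lam := by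
  intro μ hμ
  apply hmax
  have h1 : (M.map (Nat.cast : ℕ → ℂ)).charpoly.eval μ = 0 := (mem_spectrum_iff_root _ _).mp hμ
  have h2 : M.map (Nat.cast : ℕ → ℂ) = (M.map (Nat.cast : ℕ → ℤ)).map ⇑(Int.castRingHom ℂ) := by
    ext i j; simp
  rw [h2, Matrix.charpoly_map] at h1
  rw [aeval_def, Polynomial.eval₂_eq_eval_map]
  simpa using h1

lemma diag_le_trace (B : Matrix (Fin n) (Fin n) ℕ) (i : Fin n) : B i i ≤ B.trace := by
  rw [Matrix.trace]
  exact Finset.single_le_sum (f := fun j => B.diag j) (fun j _ => Nat.zero_le _)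
    (Finset.mem_univ i)

end HamSongAux

open HamSongAux

theorem ham_song_complexity_bound
    (n : ℕ) (M : Matrix (Fin n) (Fin n) ℕ)
    (hprim : ∃ k : ℕ, ∀ i j, 0 < (M ^ k) i j)
    (lam : ℝ)
    (hroot : aeval (lam : ℂ) ((M.map (Nat.cast : ℕ → ℤ)).charpoly) = 0)
    (hmax : ∀ μ : ℂ, aeval μ ((M.map (Nat.cast : ℕ → ℤ)).charpoly) = 0 →
      ‖μ‖ ≤ lam) :
    (∑ i, ∑ j, (M i j : ℝ)) - n ≤ lam ^ (2 * n) - 1 := by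
  -- lam is nonnegative
  have hlam0 : 0 ≤ lam := by
    have h := hmax (lam : ℂ) hroot
    rw [Complex.norm_real, Real.norm_eq_abs] at h
    exact le_trans (abs_nonneg lam) h
  have hb := spectrum_bound M lam hmax
  -- trivial case n = 0
  rcases Nat.eq_zero_or_pos n with rfl | hn
  · simp
  -- case n = 1
  rcases eq_or_lt_of_le (show 1 ≤ n from hn) with h1 | hn2
  · -- n = 1
    have hn1 : n = 1 := h1.symm
    subst hn1
    have htr : ((M.trace : ℕ) : ℝ) ≤ lam := by
      have h := nat_trace_bound M lam hb (t := 1) one_pos hlam0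
      simpa using h
    have htr2 : (M 0 0 : ℝ) ≤ lam := by
      have hMtr : M.trace = M 0 0 := by simp [Matrix.trace, Matrix.diag]
      rwa [hMtr] at htr
    have hsum : (∑ i, ∑ j, (M i j : ℝ)) = (M 0 0 : ℝ) := by
      simp [Fin.sum_univ_one]
    rw [hsum]
    have hM0 : (0 : ℝ) ≤ (M 0 0 : ℝ) := Nat.cast_nonneg _
    norm_num
    rcases Nat.eq_zero_or_pos (M 0 0) with h0 | h0
    · rw [h0]
      push_cast
      nlinarith [sq_nonneg lam]
    · have h1' : (1 : ℝ) ≤ (M 0 0 : ℝ) := by exact_mod_cast h0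
      nlinarith [sq_nonneg (lam - 1)]
  -- case n ≥ 2
  obtain ⟨k, hpos⟩ := hprim
  have hk : 0 < k := by
    by_contra hk0
    have hk0' : k = 0 := by omega
    subst hk0'
    have h01 : (⟨0, by omega⟩ : Fin n) ≠ (⟨1, by omega⟩ : Fin n) := by
      intro h
      have := congrArg Fin.val h
      simp at this
    have := hpos ⟨0, by omega⟩ ⟨1, by omega⟩
    rw [pow_zero, Matrix.one_apply_ne h01] at this
    exact absurd this (lt_irrefl 0)
  set E : ℕ := ∑ i, ∑ j, M i j with hE
  have hP1 : ∀ x : Fin n, E + 1 ≤ (∑ y, (M ^ (2 * n)) x y) + n := part1 M hk hpos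
  have hgoalcast : (∑ i, ∑ j, (M i j : ℝ)) = (E : ℝ) := by
    rw [hE]; push_cast; ring
  rw [hgoalcast]
  -- easy case: E + 1 ≤ n
  rcases Nat.lt_or_ge E n with hEn | hEn
  · have h1' : (E : ℝ) ≤ (n : ℝ) - 1 := by
      have : E + 1 ≤ n := by omega
      have := Nat.cast_le (α := ℝ).mpr this
      push_cast at this
      linarith
    have := pow_nonneg hlam0 (2 * n)
    linarith
  -- main case : E ≥ n
  set Rn : ℕ := E + 1 - n with hRn
  have hR1 : 1 ≤ Rn := by omega
  have hrowR : ∀ i : Fin n, Rn ≤ ∑ y, (M ^ (2 * n)) i y := by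
    intro i
    have := hP1 i
    omega
  have claim1 : ∀ m, ∀ i : Fin n, Rn ^ m ≤ ∑ y, (M ^ (2 * n * m)) i y := by
    intro m
    induction m with
    | zero =>
      intro i
      simp [Matrix.one_apply]
    | succ m ih =>
      intro i
      have hsplit : M ^ (2 * n * (m + 1)) = (M ^ (2 * n)) * (M ^ (2 * n * m)) := by
        rw [show 2 * n * (m + 1) = 2 * n + 2 * n * m by ring, pow_add]
      rw [hsplit]
      calc Rn ^ (m + 1) = Rn * Rn ^ m := by ring
        _ ≤ (∑ z, (M ^ (2 * n)) i z) * Rn ^ m := Nat.mul_le_mul_right _ (hrowR i)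
        _ = ∑ z, (M ^ (2 * n)) i z * Rn ^ m := by rw [Finset.sum_mul]
        _ ≤ ∑ z, (M ^ (2 * n)) i z * ∑ v, (M ^ (2 * n * m)) z v :=
            Finset.sum_le_sum (fun z _ => Nat.mul_le_mul_left _ (ih z))
        _ = ∑ y, ((M ^ (2 * n)) * (M ^ (2 * n * m))) i y := (rowsum_mul _ _ _).symm
  have hconn : ∀ a b : Fin n, ∃ s < n, 0 < (M ^ s) a b := fun a b =>
    reach_short M a b (hpos a b)
  have hdiag : ∀ (t : ℕ) (i j : Fin n), ∃ s < n, (M ^ t) i j ≤ (M ^ (t + s)) i i := by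
    intro t i j
    obtain ⟨s, hs, hpos'⟩ := hconn j i
    refine ⟨s, hs, ?_⟩
    calc (M ^ t) i j ≤ (M ^ t) i j * (M ^ s) j i := Nat.le_mul_of_pos_right _ hpos'
      _ ≤ (M ^ (t + s)) i i := mul_le_pow_add M t s i j i
  set C : ℝ := max 1 lam with hC
  have hC1 : (1 : ℝ) ≤ C := le_max_left _ _
  have hCnn : (0 : ℝ) ≤ C := by linarith
  set K : ℝ := (n : ℝ) * ((n : ℝ) * C ^ n) with hK
  have hK1 : (1 : ℝ) ≤ K := by
    have hn1 : (1 : ℝ) ≤ (n : ℝ) := by exact_mod_cast hn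
    have hCn : (1 : ℝ) ≤ C ^ n := by
      have h := pow_le_pow_left₀ (by norm_num : (0:ℝ) ≤ 1) hC1 n
      rwa [one_pow] at h
    have h2 : (1 : ℝ) ≤ (n : ℝ) * C ^ n :=
      le_trans hCn (le_mul_of_one_le_left (by linarith) hn1)
    exact le_trans h2 (le_mul_of_one_le_left (by linarith) hn1)
  have i0 : Fin n := ⟨0, by omega⟩
  have claim2 : ∀ m, (Rn : ℝ) ^ m ≤ K * (lam ^ (2 * n)) ^ m := by
    intro m
    rcases Nat.eq_zero_or_pos m with rfl | hm
    · simpa using hK1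
    have step1 : (Rn : ℝ) ^ m ≤ ∑ y, ((M ^ (2 * n * m)) i0 y : ℝ) := by
      have := claim1 m i0
      have h2 := Nat.cast_le (α := ℝ).mpr this
      push_cast at h2 ⊢
      exact h2
    have step2 : ∀ y : Fin n, ((M ^ (2 * n * m)) i0 y : ℝ) ≤ (n : ℝ) * lam ^ (2 * n * m) * C ^ n := by
      intro y
      obtain ⟨s, hs, hle⟩ := hdiag (2 * n * m) i0 y
      have h3 : (M ^ (2 * n * m + s)) i0 i0 ≤ (M ^ (2 * n * m + s)).trace :=
        diag_le_trace _ i0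
      have h4 : (((M ^ (2 * n * m + s)).trace : ℕ) : ℝ) ≤ (n : ℝ) * lam ^ (2 * n * m + s) :=
        nat_trace_bound M lam hb (by positivity) hlam0
      have h5 : ((M ^ (2 * n * m)) i0 y : ℝ) ≤ (n : ℝ) * lam ^ (2 * n * m + s) := by
        refine le_trans ?_ h4
        exact_mod_cast le_trans hle h3
      refine le_trans h5 ?_
      have hls : lam ^ s ≤ C ^ n :=
        calc lam ^ s ≤ C ^ s := pow_le_pow_left₀ hlam0 (le_max_right 1 lam) s
          _ ≤ C ^ n := pow_le_pow_right₀ hC1 (by omega)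
      calc (n : ℝ) * lam ^ (2 * n * m + s)
          = (n : ℝ) * lam ^ (2 * n * m) * lam ^ s := by rw [pow_add]; ring
        _ ≤ (n : ℝ) * lam ^ (2 * n * m) * C ^ n := by
            apply mul_le_mul_of_nonneg_left hls
            exact mul_nonneg (Nat.cast_nonneg _) (pow_nonneg hlam0 _)
    calc (Rn : ℝ) ^ m ≤ ∑ y, ((M ^ (2 * n * m)) i0 y : ℝ) := step1
      _ ≤ ∑ _y : Fin n, (n : ℝ) * lam ^ (2 * n * m) * C ^ n :=
          Finset.sum_le_sum (fun y _ => step2 y)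
      _ = (n : ℝ) * ((n : ℝ) * lam ^ (2 * n * m) * C ^ n) := by
          rw [Finset.sum_const, Finset.card_univ, Fintype.card_fin, nsmul_eq_mul]
      _ = K * (lam ^ (2 * n)) ^ m := by
          rw [hK, ← pow_mul]
          ring
  -- lam is positive
  have hlampos : 0 < lam := by
    rcases eq_or_lt_of_le hlam0 with h0 | h0
    · exfalso
      have h1' : 0 < (M ^ k) i0 i0 := hpos i0 i0
      have h2' : (1 : ℝ) ≤ (((M ^ k).trace : ℕ) : ℝ) := by
        have := le_trans h1' (diag_le_trace (M ^ k) i0)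
        exact_mod_cast this
      have h3' := nat_trace_bound M lam hb hk hlam0
      rw [← h0] at h3'
      rw [zero_pow (by omega), mul_zero] at h3'
      linarith
    · exact h0
  -- conclude Rn ≤ lam ^ (2n)
  have hfinal : (Rn : ℝ) ≤ lam ^ (2 * n) := by
    by_contra hcon
    push_neg at hcon
    have hq : 0 < lam ^ (2 * n) := pow_pos hlampos _
    have hgt1 : 1 < (Rn : ℝ) / lam ^ (2 * n) := (one_lt_div hq).mpr hcon
    obtain ⟨m, hm⟩ := pow_unbounded_of_one_lt K hgt1
    have : ((Rn : ℝ) / lam ^ (2 * n)) ^ m ≤ K := by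
      rw [div_pow, div_le_iff₀ (pow_pos hq m)]
      exact claim2 m
    linarith
  have hcast : (Rn : ℝ) = (E : ℝ) + 1 - (n : ℝ) := by
    rw [hRn]
    have : n ≤ E + 1 := by omega
    push_cast [Nat.cast_sub this]
    ring
  rw [hcast] at hfinal
  linarith
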